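/- Let F be a free group and R a normal subgroup of F such that the quotient G = F/R is a Schur group; in terms of the presentation this means R · [F, F] = F (G is perfect) and R ∩ [F, F] = [R, F] (the Schur multiplier of G, given by Hopf's formula (R ∩ [F, F])/[R, F], is trivial). Then for every k ≥ 1, R ∩ Γ_{k+1}(F) = Γ_{k+1}(R, F). -/

import Mathlib

section SchurAux

open Subgroup Pointwise
open scoped commutatorElement

variable {F : Type*} [Group F]

private lemma commutator_sup_le_left' (A B C N : Subgroup F) [hN : N.Normal]
    (h1 : ⁅A, C⁆ ≤ N) (h2 : ⁅B, C⁆ ≤ N) : ⁅A ⊔ B, C⁆ ≤ N := by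
  rw [Subgroup.commutator_le]
  intro g hg c hc
  rw [Subgroup.sup_eq_closure] at hg
  induction hg using Subgroup.closure_induction with
  | mem x hx =>
    rcases hx with h | h
    · exact h1 (Subgroup.commutator_mem_commutator h hc)
    · exact h2 (Subgroup.commutator_mem_commutator h hc)
  | one =>
    have : ⁅(1 : F), c⁆ = 1 := by group
    rw [this]; exact N.one_mem
  | mul x y hx hy px py =>
    have key : ⁅x * y, c⁆ = x * ⁅y, c⁆ * x⁻¹ * ⁅x, c⁆ := by group
    rw [key]
    exact N.mul_mem (hN.conj_mem _ py x) px
  | inv x hx px =>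
    have key : ⁅x⁻¹, c⁆ = x⁻¹ * ⁅x, c⁆⁻¹ * (x⁻¹)⁻¹ := by group
    rw [key]
    exact hN.conj_mem _ (N.inv_mem px) x⁻¹

private lemma commutator_sup_le_right' (A B C N : Subgroup F) [N.Normal]
    (h1 : ⁅C, A⁆ ≤ N) (h2 : ⁅C, B⁆ ≤ N) : ⁅C, A ⊔ B⁆ ≤ N := by
  rw [Subgroup.commutator_comm C A] at h1
  rw [Subgroup.commutator_comm C B] at h2
  rw [Subgroup.commutator_comm C (A ⊔ B)]
  exact commutator_sup_le_left' A B C N h1 h2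

/-- If `φ : S →* S` satisfies `φ x ≡ x mod N` for a normal subgroup `N`, then
`φ x ≡ x mod ⁅N, ⊤⁆` for every `x` in the commutator subgroup. -/
private lemma diff_mem_commutator {S : Type*} [Group S] (φ : S →* S) (N : Subgroup S)
    [hNn : N.Normal] (hd : ∀ x, φ x * x⁻¹ ∈ N) :
    ∀ x ∈ commutator S, φ x * x⁻¹ ∈ ⁅N, (⊤ : Subgroup S)⁆ := by
  set C := ⁅N, (⊤ : Subgroup S)⁆ with hC
  haveI hCn : C.Normal := Subgroup.commutator_normal N ⊤
  set π : S →* S ⧸ C := QuotientGroup.mk' C with hπ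
  have hcent : ∀ n, n ∈ N → ∀ q : S ⧸ C, π n * q = q * π n := by
    intro n hn q
    obtain ⟨g, rfl⟩ := QuotientGroup.mk'_surjective C q
    have h1 : π ⁅n, g⁆ = 1 :=
      (QuotientGroup.eq_one_iff _).2 (Subgroup.commutator_mem_commutator hn (Subgroup.mem_top g))
    rw [map_commutatorElement] at h1
    exact (commutatorElement_eq_one_iff_commute.mp h1).eq
  have hdq : ∀ x : S, π (φ x) * (π x)⁻¹ = π (φ x * x⁻¹) := by
    intro x; rw [map_mul, map_inv]
  have hcent' : ∀ x : S, ∀ q : S ⧸ C, (π (φ x) * (π x)⁻¹) * q = q * (π (φ x) * (π x)⁻¹) := by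
    intro x q; rw [hdq]; exact hcent _ (hd x) q
  let D : S →* S ⧸ C :=
    { toFun := fun x => π (φ x) * (π x)⁻¹
      map_one' := by simp
      map_mul' := by
        intro x y
        have h := hcent' y (π x)⁻¹
        simp only [map_mul, mul_inv_rev]
        calc π (φ x) * π (φ y) * ((π y)⁻¹ * (π x)⁻¹)
            = π (φ x) * (π (φ y) * (π y)⁻¹ * (π x)⁻¹) := by group
          _ = π (φ x) * ((π x)⁻¹ * (π (φ y) * (π y)⁻¹)) := by rw [h]
          _ = π (φ x) * (π x)⁻¹ * (π (φ y) * (π y)⁻¹) := by group }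
  intro x hx
  have hker : commutator S ≤ D.ker := by
    rw [_root_.commutator_def, Subgroup.commutator_le]
    intro a _ b _
    rw [MonoidHom.mem_ker, map_commutatorElement]
    rw [commutatorElement_eq_one_iff_commute]
    show D a * D b = D b * D a
    exact hcent' a (D b)
  have h1 : D x = 1 := hker hx
  have h2 : π (φ x * x⁻¹) = 1 := by rw [← hdq x]; exact h1
  exact (QuotientGroup.eq_one_iff _).1 h2

/-- In a free group, if `R ⊔ S = ⊤` with `R` normal, there is an endomorphism `φ` with image
inside `S` such that `φ f ≡ f mod R` for all `f`. -/
private lemma exists_retraction [IsFreeGroup F] (R S : Subgroup F) [R.Normal]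
    (h : R ⊔ S = ⊤) : ∃ φ : F →* F, (∀ f, φ f ∈ S) ∧ ∀ f, φ f * f⁻¹ ∈ R := by
  have hdecomp : ∀ g : IsFreeGroup.Generators F,
      ∃ r ∈ R, ∃ s ∈ S, r * s = IsFreeGroup.of g := by
    intro g
    have hmem : IsFreeGroup.of g ∈ R ⊔ S := h ▸ Subgroup.mem_top _
    have hset : (IsFreeGroup.of g : F) ∈ ((R : Set F) * (S : Set F)) := by
      rw [← Subgroup.normal_mul R S]; exact hmem
    exact Set.mem_mul.mp hset
  choose r hr s hs hgen using hdecomp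
  let φS : F →* S := IsFreeGroup.lift fun g => (⟨s g, hs g⟩ : S)
  refine ⟨S.subtype.comp φS, fun f => (φS f).2, ?_⟩
  have hquot : (QuotientGroup.mk' R).comp (S.subtype.comp φS) = QuotientGroup.mk' R := by
    apply IsFreeGroup.ext_hom
    intro g
    show QuotientGroup.mk' R ((φS (IsFreeGroup.of g) : F)) = QuotientGroup.mk' R (IsFreeGroup.of g)
    rw [IsFreeGroup.lift_of]
    conv_rhs => rw [← hgen g]
    rw [map_mul]
    have : QuotientGroup.mk' R (r g) = 1 := (QuotientGroup.eq_one_iff _).2 (hr g)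
    rw [this, one_mul]
  intro f
  have hf : QuotientGroup.mk' R ((S.subtype.comp φS) f) = QuotientGroup.mk' R f :=
    DFunLike.congr_fun hquot f
  have : QuotientGroup.mk' R ((S.subtype.comp φS) f * f⁻¹) = 1 := by
    rw [map_mul, map_inv, hf, mul_inv_cancel]
  exact (QuotientGroup.eq_one_iff _).1 this

/-- Key transfer lemma: Hopf-type triviality passes from the presentation `(F, R)` to the
presentation `(S, R ⊓ S)` whenever `R ⊔ S = ⊤`. -/
private lemma inf_commutator_le [IsFreeGroup F] (R S : Subgroup F) [hRn : R.Normal]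
    (hsup : R ⊔ S = ⊤) (hmult : R ⊓ commutator F ≤ ⁅R, (⊤ : Subgroup F)⁆) :
    R ⊓ ⁅S, S⁆ ≤ ⁅R ⊓ S, S⁆ := by
  obtain ⟨φ, hφS, hφR⟩ := exists_retraction R S hsup
  let φS : F →* S := φ.codRestrict S hφS
  let φ' : S →* S := φS.comp S.subtype
  set N : Subgroup S := (R ⊓ S).subgroupOf S with hNdef
  haveI hNn : N.Normal := by
    constructor
    intro n hn g
    rw [Subgroup.mem_subgroupOf] at hn ⊢
    refine ⟨?_, (g * n * g⁻¹).2⟩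
    have : ((g * n * g⁻¹ : S) : F) = (g : F) * (n : F) * (g : F)⁻¹ := by push_cast; ring_nf
    rw [this]
    exact hRn.conj_mem _ hn.1 g
  have hφ'coe : ∀ z : S, ((φ' z : S) : F) = φ (z : F) := fun z => rfl
  have hd : ∀ z : S, φ' z * z⁻¹ ∈ N := by
    intro z
    rw [Subgroup.mem_subgroupOf]
    refine ⟨?_, (φ' z * z⁻¹).2⟩
    have : ((φ' z * z⁻¹ : S) : F) = φ (z : F) * (z : F)⁻¹ := by push_cast; rw [hφ'coe]
    rw [this]
    exact hφR z
  intro x hx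
  obtain ⟨hxR, hxSS⟩ := hx
  have hmapS : Subgroup.map S.subtype (⊤ : Subgroup S) = S := by
    rw [← MonoidHom.range_eq_map]
    exact Subgroup.range_subtype S
  have hxS' : x ∈ Subgroup.map S.subtype ⁅(⊤ : Subgroup S), (⊤ : Subgroup S)⁆ := by
    rw [Subgroup.map_commutator, hmapS]
    exact hxSS
  obtain ⟨y, hy, hyx⟩ := hxS'
  have hyx' : (y : F) = x := hyx
  have hycomm : y ∈ commutator S := hy
  have hxcomm : x ∈ ⁅R, (⊤ : Subgroup F)⁆ := by
    refine hmult ⟨hxR, ?_⟩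
    rw [_root_.commutator_def]
    exact Subgroup.commutator_mono le_top le_top hxSS
  have hφx : φS x ∈ ⁅N, (⊤ : Subgroup S)⁆ := by
    have hmap : Subgroup.map φS ⁅R, (⊤ : Subgroup F)⁆ ≤ ⁅N, (⊤ : Subgroup S)⁆ := by
      rw [Subgroup.map_commutator]
      refine Subgroup.commutator_mono ?_ le_top
      rintro z ⟨w, hw, rfl⟩
      rw [Subgroup.mem_subgroupOf]
      refine ⟨?_, (φS w).2⟩
      show ((φS w : S) : F) ∈ R
      have h1 : ((φS w : S) : F) = φ w := rfl
      rw [h1]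
      have h2 : φ w * w⁻¹ ∈ R := hφR w
      have : φ w = (φ w * w⁻¹) * w := by group
      rw [this]
      exact R.mul_mem h2 hw
    exact hmap ⟨x, hxcomm, rfl⟩
  have hdy : φ' y * y⁻¹ ∈ ⁅N, (⊤ : Subgroup S)⁆ := diff_mem_commutator φ' N hd y hycomm
  have hφ'y : φ' y = φS x := by
    have h0 : φ' y = φS ((y : F)) := rfl
    rw [h0, hyx']
  have hy' : y ∈ ⁅N, (⊤ : Subgroup S)⁆ := by
    have hykey : y = (φ' y * y⁻¹)⁻¹ * φ' y := by group
    rw [hykey]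
    exact mul_mem (inv_mem hdy) (hφ'y ▸ hφx)
  have hmem : x ∈ Subgroup.map S.subtype ⁅N, (⊤ : Subgroup S)⁆ := ⟨y, hy', hyx⟩
  rw [Subgroup.map_commutator, hmapS, hNdef, Subgroup.subgroupOf_map_subtype,
    inf_assoc, inf_idem] at hmem
  exact hmem

end SchurAux

/-- The relative series `Γ_{k+1}(R, F)`: `Γ₁(R, F) = R` and
`Γ_{k+1}(R, F) = [Γ_k(R, F), Γ_k(F)]`, so `relDerivedSeries R k = Γ_{k+1}(R, F)`. -/
def relDerivedSeries {F : Type*} [Group F] (R : Subgroup F) : ℕ → Subgroup F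
  | 0 => R
  | k + 1 => ⁅relDerivedSeries R k, derivedSeries F k⁆

private lemma relDerivedSeries_succ' {F : Type*} [Group F] (R : Subgroup F) (k : ℕ) :
    relDerivedSeries R (k + 1) = ⁅relDerivedSeries R k, derivedSeries F k⁆ := rfl

/-- Let `F` be a free group and `R` a normal subgroup of `F` such that `F ⧸ R` is a
Schur group, i.e. `R · [F, F] = F` (perfectness) and `R ∩ [F, F] = [R, F]` (triviality of
the Schur multiplier via Hopf's formula). Then for every `k ≥ 1`,
`R ∩ Γ_{k+1}(F) = Γ_{k+1}(R, F)`. -/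
theorem inf_derivedSeries_eq_relDerivedSeries_of_schur
    {F : Type*} [Group F] [IsFreeGroup F] (R : Subgroup F) [R.Normal]
    (hperf : R ⊔ commutator F = ⊤)
    (hmult : R ⊓ commutator F = ⁅R, (⊤ : Subgroup F)⁆) :
    ∀ k, 1 ≤ k → R ⊓ derivedSeries F k = relDerivedSeries R k := by
  have hsup : ∀ k, R ⊔ derivedSeries F k = ⊤ := by
    intro k
    induction k with
    | zero => simp [derivedSeries_zero]
    | succ k ih =>
      haveI hDn : (derivedSeries F k).Normal := derivedSeries_normal F k
      haveI hDn1 : (derivedSeries F (k + 1)).Normal := derivedSeries_normal F (k + 1)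
      haveI hNn : (R ⊔ derivedSeries F (k + 1)).Normal := Subgroup.sup_normal _ _
      rw [eq_top_iff, ← hperf]
      refine sup_le le_sup_left ?_
      rw [commutator_def, ← ih]
      refine commutator_sup_le_left' _ _ _ _ ?_ ?_
      · exact le_trans (Subgroup.commutator_le_left R _) le_sup_left
      · refine commutator_sup_le_right' _ _ _ _ ?_ ?_
        · exact le_trans (Subgroup.commutator_le_right _ R) le_sup_left
        · rw [← derivedSeries_succ]; exact le_sup_right
  intro k hk
  induction k with
  | zero => omega
  | succ k ih =>
    rcases Nat.eq_zero_or_pos k with rfl | hk1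
    · rw [derivedSeries_one, hmult, relDerivedSeries_succ']
      rfl
    · have ihk := ih hk1
      refine le_antisymm ?_ ?_
      · have h1 : R ⊓ ⁅derivedSeries F k, derivedSeries F k⁆ ≤
            ⁅R ⊓ derivedSeries F k, derivedSeries F k⁆ :=
          inf_commutator_le R (derivedSeries F k) (hsup k) (le_of_eq hmult)
        rw [derivedSeries_succ, relDerivedSeries_succ', ← ihk]
        exact h1
      · rw [relDerivedSeries_succ', ← ihk]
        refine le_inf ?_ ?_
        · exact le_trans (Subgroup.commutator_mono inf_le_left le_top)
            (Subgroup.commutator_le_left R ⊤)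
        · rw [derivedSeries_succ]
          exact Subgroup.commutator_mono inf_le_right le_rfl
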